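/- Let m be a positive integer and b, c nonnegative integers with b ≠ c. Then ∑_{k=1}^{m} ψ₀(k+b)/(k+c)² = ∑_{k=1}^{m} ψ₁(k+c)/(k+b) + (1/(c-b)²)·(ψ₀(c+m+1) - ψ₀(c+1) - ψ₀(b+m+1) + ψ₀(b+1)) + (1/(c-b))·(ψ₁(c+1) - ψ₁(c+m+1)) - ψ₁(c+m+1)·ψ₀(b+m+1) + ψ₁(c+1)·ψ₀(b+1). -/
import Mathlib


open Finset

/-- Digamma function at a positive integer argument: `ψ₀ l = -γ + ∑_{i=1}^{l-1} 1/i`. -/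
noncomputable def ψ₀ (l : ℕ) : ℝ :=
  -Real.eulerMascheroniConstant + ∑ i ∈ Finset.range (l - 1), (1 : ℝ) / (i + 1)

/-- Trigamma function at a positive integer argument: `ψ₁ l = π²/6 - ∑_{i=1}^{l-1} 1/i²`. -/
noncomputable def ψ₁ (l : ℕ) : ℝ :=
  Real.pi ^ 2 / 6 - ∑ i ∈ Finset.range (l - 1), (1 : ℝ) / (i + 1) ^ 2

/-- Tetragamma function at a positive integer argument:
`ψ₂ l = -2ζ(3) + 2∑_{i=1}^{l-1} 1/i³`, where `ζ(3) = ∑_{i=1}^∞ 1/i³`. -/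
noncomputable def ψ₂ (l : ℕ) : ℝ :=
  -2 * (∑' i : ℕ, (1 : ℝ) / (i + 1) ^ 3) +
    2 * ∑ i ∈ Finset.range (l - 1), (1 : ℝ) / (i + 1) ^ 3


lemma psi0_succ (n : ℕ) : ψ₀ (n + 2) = ψ₀ (n + 1) + 1 / ((n : ℝ) + 1) := by
  simp [ψ₀, Finset.sum_range_succ]
  ring

lemma psi1_succ (n : ℕ) : ψ₁ (n + 2) = ψ₁ (n + 1) - 1 / ((n : ℝ) + 1) ^ 2 := by
  simp [ψ₁, Finset.sum_range_succ]
  ring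

lemma keylemma (x y d S T P Q R U V W : ℝ) (hx : x ≠ 0) (hy : y ≠ 0) (hd : d ≠ 0)
    (hdxy : d = x - y)
    (ih : S = T + 1/d^2*(P - Q - R + U) + 1/d*(V - W) - W*R + V*U) :
    S + R / x^2 = (T + W / y) + 1/d^2*((P + 1/x) - Q - (R + 1/y) + U)
      + 1/d*(V - (W - 1/x^2)) - (W - 1/x^2)*(R + 1/y) + V*U := by
  subst hdxy
  rw [ih]
  field_simp
  ring

theorem stmt4_aux (b c : ℕ) (hbc : b ≠ c) : ∀ m : ℕ,
    ∑ k ∈ Finset.Icc 1 m, ψ₀ (k + b) / ((k : ℝ) + c) ^ 2 =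
      ∑ k ∈ Finset.Icc 1 m, ψ₁ (k + c) / ((k : ℝ) + b) +
        (1 / ((c : ℝ) - b) ^ 2) *
          (ψ₀ (c + m + 1) - ψ₀ (c + 1) - ψ₀ (b + m + 1) + ψ₀ (b + 1)) +
        (1 / ((c : ℝ) - b)) * (ψ₁ (c + 1) - ψ₁ (c + m + 1)) -
        ψ₁ (c + m + 1) * ψ₀ (b + m + 1) + ψ₁ (c + 1) * ψ₀ (b + 1) := by
  have hcb : (c : ℝ) - b ≠ 0 := sub_ne_zero.mpr (fun h => hbc (by exact_mod_cast h.symm))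
  intro m
  induction m with
  | zero => simp
  | succ m ih =>
    rw [Finset.sum_Icc_succ_top (by omega : 1 ≤ m + 1),
        Finset.sum_Icc_succ_top (by omega : 1 ≤ m + 1)]
    have e1 : m + 1 + b = b + m + 1 := by omega
    have e2 : m + 1 + c = c + m + 1 := by omega
    have e3 : c + (m + 1) + 1 = (c + m) + 2 := by omega
    have e4 : b + (m + 1) + 1 = (b + m) + 2 := by omega
    rw [e1, e2, e3, e4, psi0_succ (b + m), psi0_succ (c + m), psi1_succ (c + m)]
    have h1 : ((c : ℝ) + m + 1) ≠ 0 := by positivity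
    have h2 : ((b : ℝ) + m + 1) ≠ 0 := by positivity
    push_cast
    linear_combination keylemma ((c : ℝ) + m + 1) ((b : ℝ) + m + 1) ((c : ℝ) - b)
      (∑ k ∈ Finset.Icc 1 m, ψ₀ (k + b) / ((k : ℝ) + c) ^ 2)
      (∑ k ∈ Finset.Icc 1 m, ψ₁ (k + c) / ((k : ℝ) + b))
      (ψ₀ (c + m + 1)) (ψ₀ (c + 1)) (ψ₀ (b + m + 1)) (ψ₀ (b + 1))
      (ψ₁ (c + 1)) (ψ₁ (c + m + 1)) h1 h2 hcb (by ring) ih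

theorem stmt4 (m b c : ℕ) (hm : 0 < m) (hbc : b ≠ c) :
    ∑ k ∈ Finset.Icc 1 m, ψ₀ (k + b) / ((k : ℝ) + c) ^ 2 =
      ∑ k ∈ Finset.Icc 1 m, ψ₁ (k + c) / ((k : ℝ) + b) +
        (1 / ((c : ℝ) - b) ^ 2) *
          (ψ₀ (c + m + 1) - ψ₀ (c + 1) - ψ₀ (b + m + 1) + ψ₀ (b + 1)) +
        (1 / ((c : ℝ) - b)) * (ψ₁ (c + 1) - ψ₁ (c + m + 1)) -
        ψ₁ (c + m + 1) * ψ₀ (b + m + 1) + ψ₁ (c + 1) * ψ₀ (b + 1) := by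
  exact stmt4_aux b c hbc m
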